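/- Let n ≥ 1, let a ∈ ℂ, and let f and g be symmetric polynomials in the n variables x₁,…,xₙ over ℂ, each of total degree strictly less than n. If the polynomials in n−1 variables obtained by substituting a for the last variable agree, i.e. f(x₁,…,x_{n−1},a) = g(x₁,…,x_{n−1},a), then f = g. -/

import Mathlib

open MvPolynomial

lemma my_aeval_eq_eval {n : ℕ} (c : Fin n → ℂ) (p : MvPolynomial (Fin n) ℂ) :
    (aeval c) p = eval c p := by
  rw [aeval_def, eval, coe_eval₂Hom]
  congr 1

/-- Composing `eval` with `aeval` on multivariate polynomials. -/
lemma my_eval_aeval {n : ℕ} {A : Type*} [CommRing A] [Algebra ℂ A]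
    (φ : A →ₐ[ℂ] ℂ) (g : Fin n → A) (p : MvPolynomial (Fin n) ℂ) :
    φ (aeval g p) = eval (fun j => φ (g j)) p := by
  rw [← coe_aeval_eq_eval]
  exact (AlgHom.congr_fun (comp_aeval (f := g) φ) p)

/-- Substitution of `C a` at variable `i` differs from `p` by a multiple of `X i - C a`. -/
lemma my_sub_dvd {n : ℕ} (i : Fin n) (a : ℂ) (p : MvPolynomial (Fin n) ℂ) :
    (X i - C a) ∣ (p - aeval (fun j => if j = i then C a else X j) p) := by
  induction p using MvPolynomial.induction_on with
  | C c => simp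
  | add p q hp hq =>
      have : (p + q) - aeval (fun j => if j = i then C a else X j) (p + q)
          = (p - aeval (fun j => if j = i then C a else X j) p)
            + (q - aeval (fun j => if j = i then C a else X j) q) := by
        rw [map_add]; ring
      rw [this]; exact dvd_add hp hq
  | mul_X p j hp =>
      have key : p * X j - aeval (fun k => if k = i then C a else X k) (p * X j)
          = (p - aeval (fun k => if k = i then C a else X k) p) * X j
            + aeval (fun k => if k = i then C a else X k) p
              * (X j - (if j = i then C a else X j)) := by
        rw [map_mul, aeval_X]; ring
      rw [key]
      refine dvd_add (Dvd.dvd.mul_right hp _) (Dvd.dvd.mul_left ?_ _)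
      by_cases hji : j = i
      · subst hji; simp
      · simp [hji]

lemma my_dvd_of_vanish {n : ℕ} (i : Fin n) (a : ℂ) (p : MvPolynomial (Fin n) ℂ)
    (hv : ∀ c : Fin n → ℂ, c i = a → eval c p = 0) :
    (X i - C a) ∣ p := by
  have h0 : aeval (fun j => if j = i then C a else X j) p = 0 := by
    apply MvPolynomial.funext (q := 0)
    intro c
    rw [map_zero, ← my_aeval_eq_eval, my_eval_aeval (MvPolynomial.aeval c) _ p]
    have : (fun j => (MvPolynomial.aeval c) (if j = i then C a else X j))
        = fun j => if j = i then a else c j := by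
      funext j; by_cases hj : j = i <;> simp [hj]
    rw [this]
    exact hv _ (by simp)
  have := my_sub_dvd i a p
  rwa [h0, sub_zero] at this

lemma my_deg_mul {n : ℕ} (i : Fin n) (a : ℂ) (p : MvPolynomial (Fin n) ℂ) (hp : p ≠ 0) :
    p.totalDegree + 1 ≤ ((X i - C a) * p).totalDegree := by
  obtain ⟨d, hd, hdeg⟩ := Finset.exists_mem_eq_sup p.support
    (Finset.nonempty_iff_ne_empty.mpr (mt MvPolynomial.support_eq_empty.mp hp)) (fun s => s.sum fun _ e => e)
  have hdeg' : (d.sum fun _ e => e) = p.totalDegree := hdeg.symm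
  have hsum : ((d + Finsupp.single i 1).sum fun _ e => e) = p.totalDegree + 1 := by
    rw [Finsupp.sum_add_index' (fun _ => rfl) (fun _ _ _ => rfl),
      Finsupp.sum_single_index rfl, hdeg']
  have hcoeff : coeff (d + Finsupp.single i 1) ((X i - C a) * p) = coeff d p := by
    rw [sub_mul, coeff_sub]
    have h1 : coeff (d + Finsupp.single i 1) (X i * p) = coeff d p := by
      rw [add_comm d, coeff_X_mul]
    have h2 : coeff (d + Finsupp.single i 1) (C a * p) = 0 := by
      rw [coeff_C_mul]
      have : coeff (d + Finsupp.single i 1) p = 0 := by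
        by_contra hne
        have := le_totalDegree (p := p) (mem_support_iff.mpr hne)
        omega
      rw [this, mul_zero]
    rw [h1, h2, sub_zero]
  have hmem : (d + Finsupp.single i 1) ∈ ((X i - C a) * p).support := by
    rw [mem_support_iff, hcoeff]
    exact mem_support_iff.mp hd
  have := le_totalDegree hmem
  omega

lemma my_key {n : ℕ} (a : ℂ) (s : Finset (Fin n)) :
    ∀ p : MvPolynomial (Fin n) ℂ, p.totalDegree < s.card →
      (∀ c : Fin n → ℂ, (∃ i ∈ s, c i = a) → eval c p = 0) → p = 0 := by
  induction s using Finset.induction_on with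
  | empty => intro p hdeg _; simp at hdeg
  | @insert i s hi ih =>
      intro p hdeg hv
      by_cases hp : p = 0
      · exact hp
      obtain ⟨p', hp'⟩ := my_dvd_of_vanish i a p
        (fun c hc => hv c ⟨i, Finset.mem_insert_self i s, hc⟩)
      by_cases hp'0 : p' = 0
      · rw [hp', hp'0, mul_zero]
      exfalso
      have hdp' : p'.totalDegree < s.card := by
        have h1 := my_deg_mul i a p' hp'0
        rw [← hp'] at h1
        rw [Finset.card_insert_of_notMem hi] at hdeg
        omega
      have hvan : ∀ c : Fin n → ℂ, (∃ j ∈ s, c j = a) → eval c p' = 0 := by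
        intro c ⟨j, hjs, hja⟩
        have hji : j ≠ i := fun h => hi (h ▸ hjs)
        have step : ∀ t : ℂ, t ≠ a → eval (Function.update c i t) p' = 0 := by
          intro t ht
          have h0 : eval (Function.update c i t) p = 0 := by
            apply hv
            exact ⟨j, Finset.mem_insert_of_mem hjs, by rw [Function.update_of_ne hji, hja]⟩
          rw [hp', map_mul, map_sub, eval_X, eval_C, Function.update_self] at h0
          rcases mul_eq_zero.mp h0 with h | h
          · exact absurd (sub_eq_zero.mp h) ht
          · exact h
        set q : Polynomial ℂ :=
          aeval (fun k => if k = i then Polynomial.X else Polynomial.C (c k)) p' with hq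
        have heq : ∀ t : ℂ, q.eval t = eval (Function.update c i t) p' := by
          intro t
          have h1 := my_eval_aeval (Polynomial.aeval t)
            (fun k => if k = i then Polynomial.X else Polynomial.C (c k)) p'
          have hfun : (fun k => (Polynomial.aeval t)
              (if k = i then Polynomial.X else Polynomial.C (c k)))
              = Function.update c i t := by
            funext k
            by_cases hk : k = i <;> simp [hk, Function.update_apply]
          rw [hfun] at h1
          rw [hq, ← Polynomial.coe_aeval_eq_eval, h1]
        have hq0 : q = 0 := by
          apply Polynomial.eq_zero_of_infinite_isRoot
          apply Set.Infinite.mono (s := {a}ᶜ)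
          · intro t ht
            simp only [Polynomial.IsRoot, Set.mem_setOf_eq]
            rw [heq t]; exact step t ht
          · exact Set.Finite.infinite_compl (Set.finite_singleton a)
        have : eval c p' = q.eval (c i) := by
          rw [heq (c i), Function.update_eq_self]
        rw [this, hq0, Polynomial.eval_zero]
      exact hp'0 (ih p' hdp' hvan)

theorem symm_poly_determined_by_evaluation
    (n : ℕ) (hn : 1 ≤ n) (a : ℂ)
    (f g : MvPolynomial (Fin n) ℂ)
    (hf_sym : ∀ σ : Equiv.Perm (Fin n), rename σ f = f)
    (hg_sym : ∀ σ : Equiv.Perm (Fin n), rename σ g = g)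
    (hf_deg : f.totalDegree < n) (hg_deg : g.totalDegree < n)
    (h : aeval (fun i : Fin n => if h : (i : ℕ) < n - 1
          then (X ⟨(i : ℕ), h⟩ : MvPolynomial (Fin (n - 1)) ℂ) else C a) f
        = aeval (fun i : Fin n => if h : (i : ℕ) < n - 1
          then (X ⟨(i : ℕ), h⟩ : MvPolynomial (Fin (n - 1)) ℂ) else C a) g) :
    f = g := by
  set G : Fin n → MvPolynomial (Fin (n - 1)) ℂ := fun i : Fin n =>
    if h : (i : ℕ) < n - 1 then (X ⟨(i : ℕ), h⟩ : MvPolynomial (Fin (n - 1)) ℂ) else C a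
    with hG
  have hlastlt : n - 1 < n := by omega
  set last : Fin n := ⟨n - 1, hlastlt⟩ with hlastdef
  have hlast : ∀ c' : Fin n → ℂ, c' last = a → eval c' f = eval c' g := by
    intro c' hc'
    set d : Fin (n - 1) → ℂ := fun k => c' ⟨(k : ℕ), lt_of_lt_of_le k.isLt (Nat.sub_le n 1)⟩
      with hd
    have hcomp : ∀ p : MvPolynomial (Fin n) ℂ,
        (MvPolynomial.aeval d) (aeval G p) = eval c' p := by
      intro p
      rw [my_eval_aeval (MvPolynomial.aeval d) G p]
      have hfun : (fun j => (MvPolynomial.aeval d) (G j)) = c' := by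
        funext j
        by_cases hj : (j : ℕ) < n - 1
        · have hGj : G j = X ⟨(j : ℕ), hj⟩ := by simp [hG, hj]
          rw [hGj, aeval_X, hd]
        · have hjl : j = last := Fin.ext (by have := j.isLt; simp [hlastdef]; omega)
          have hGj : G j = C a := by simp [hG, hj]
          rw [hGj, aeval_C, hjl]
          simp [hc']
      rw [hfun]
    rw [← hcomp f, ← hcomp g, h]
  have hall : ∀ c : Fin n → ℂ, (∃ i ∈ (Finset.univ : Finset (Fin n)), c i = a) →
      eval c (f - g) = 0 := by
    rintro c ⟨i, -, hci⟩
    have hf' : eval c f = eval (c ∘ (Equiv.swap i last)) f := by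
      conv_lhs => rw [← hf_sym (Equiv.swap i last)]
      rw [eval_rename]
    have hg' : eval c g = eval (c ∘ (Equiv.swap i last)) g := by
      conv_lhs => rw [← hg_sym (Equiv.swap i last)]
      rw [eval_rename]
    have hlasteq : (c ∘ (Equiv.swap i last)) last = a := by
      simp [Function.comp, Equiv.swap_apply_right, hci]
    rw [map_sub, hf', hg', hlast _ hlasteq, sub_self]
  have hdeg : (f - g).totalDegree < (Finset.univ : Finset (Fin n)).card := by
    rw [Finset.card_univ, Fintype.card_fin]
    calc (f - g).totalDegree ≤ max f.totalDegree (-g).totalDegree := by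
          rw [sub_eq_add_neg]; exact MvPolynomial.totalDegree_add f (-g)
      _ ≤ max f.totalDegree g.totalDegree := by rw [totalDegree_neg]
      _ < n := max_lt hf_deg hg_deg
  have := my_key a Finset.univ (f - g) hdeg hall
  exact sub_eq_zero.mp this
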